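/- arXiv:2305.10881 — 6 statements merged into one kernel-verified Lean document; each statement's English description precedes it below -/
import Mathlib

section
/- Let z_0 = γ with 0 < γ < 1/4 and z_{t+1} = sqrt(z_t(1 - z_t)). If t ≥ log₂(log₂(1/γ)) (with t a natural number), then z_t ≥ 1/4. -/
theorem stmt_3 (γ : ℝ) (hγ0 : 0 < γ) (hγ4 : γ < 1/4)
    (z : ℕ → ℝ) (h0 : z 0 = γ)
    (hrec : ∀ t, z (t+1) = Real.sqrt (z t * (1 - z t)))
    (t : ℕ) (ht : (t : ℝ) ≥ Real.logb 2 (Real.logb 2 (1/γ))) :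
    z t ≥ 1/4 := by
  have hγ1 : γ < 1 := by linarith
  have sqrt4 : Real.sqrt (1/4) = 1/2 := by
    rw [show (1/4:ℝ) = (1/2)^2 by norm_num, Real.sqrt_sq (by norm_num)]
  -- key induction: z t ≤ 1/2 and z t ≥ γ ^ ((1/2)^t) / 2
  have key : ∀ n : ℕ, z n ≤ 1/2 ∧ z n ≥ γ ^ ((1/2:ℝ)^n) / 2 := by
    intro n
    induction n with
    | zero =>
      constructor
      · rw [h0]; linarith
      · rw [h0]
        simp [Real.rpow_natCast]
        linarith
    | succ k ih =>
      obtain ⟨ih1, ih2⟩ := ih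
      set a := γ ^ ((1/2:ℝ)^k) with ha
      have hapos : 0 < a := Real.rpow_pos_of_pos hγ0 _
      have hzpos : 0 ≤ z k := by linarith
      constructor
      · rw [hrec]
        calc Real.sqrt (z k * (1 - z k)) ≤ Real.sqrt (1/4) := by
              apply Real.sqrt_le_sqrt; nlinarith [sq_nonneg (z k - 1/2)]
          _ = 1/2 := sqrt4
      · rw [hrec]
        have h1 : z k * (1 - z k) ≥ a/4 := by nlinarith
        have h2 : Real.sqrt (a/4) = Real.sqrt a / 2 := by
          rw [show a/4 = a/2^2 by ring, Real.sqrt_div hapos.le,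
            Real.sqrt_sq (by norm_num : (0:ℝ) ≤ 2)]
        have h3 : Real.sqrt a = γ ^ ((1/2:ℝ)^(k+1)) := by
          rw [Real.sqrt_eq_rpow, ha, ← Real.rpow_mul hγ0.le]
          ring_nf
        calc Real.sqrt (z k * (1 - z k)) ≥ Real.sqrt (a/4) :=
              Real.sqrt_le_sqrt (by linarith)
          _ = γ ^ ((1/2:ℝ)^(k+1)) / 2 := by rw [h2, h3]
  -- now the exponent bound
  set L := Real.logb 2 (1/γ) with hLdef
  have hL2 : (2:ℝ) < L := by
    have h4 : (4:ℝ) < 1/γ := by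
      rw [lt_div_iff₀ hγ0]; linarith
    have := Real.logb_lt_logb (by norm_num : (1:ℝ) < 2) (by norm_num : (0:ℝ) < 4) h4
    calc (2:ℝ) = Real.logb 2 4 := by
          rw [show (4:ℝ) = 2^(2:ℕ) by norm_num, Real.logb_pow]
          simp [Real.logb_self_eq_one]
      _ < L := this
  have hLpos : 0 < L := by linarith
  have h2t : L ≤ (2:ℝ)^(t:ℝ) := by
    calc L = (2:ℝ) ^ Real.logb 2 L := (Real.rpow_logb (by norm_num) (by norm_num) hLpos).symm
      _ ≤ (2:ℝ)^(t:ℝ) := Real.rpow_le_rpow_of_exponent_le (by norm_num) ht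
  have hexp : ((1/2:ℝ)^t : ℝ) ≤ 1/L := by
    have h2tn : ((2:ℝ)^t : ℝ) = (2:ℝ)^(t:ℝ) := (Real.rpow_natCast 2 t).symm
    have hpow : L ≤ (2:ℝ)^t := by rw [h2tn]; exact h2t
    have : (1:ℝ)/(2:ℝ)^t ≤ 1/L := one_div_le_one_div_of_le hLpos hpow
    calc ((1/2:ℝ)^t : ℝ) = 1/(2:ℝ)^t := by rw [div_pow]; norm_num
      _ ≤ 1/L := this
  have hmono : γ ^ ((1/2:ℝ)^t) ≥ γ ^ (1/L) :=
    Real.rpow_le_rpow_of_exponent_ge hγ0 hγ1.le hexp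
  have hval : γ ^ (1/L) = 1/2 := by
    have hlogγ : Real.log γ < 0 := Real.log_neg hγ0 hγ1
    have hlog2 : Real.log 2 > 0 := Real.log_pos (by norm_num)
    have hLval : L = -Real.log γ / Real.log 2 := by
      rw [hLdef, Real.logb, Real.log_div (by norm_num) (ne_of_gt hγ0)]
      simp
    rw [Real.rpow_def_of_pos hγ0]
    have : Real.log γ * (1/L) = -Real.log 2 := by
      rw [hLval]; field_simp [ne_of_lt hlogγ]
    rw [this, Real.exp_neg, Real.exp_log (by norm_num)]; norm_num
  have hk := (key t).2
  linarith [hmono, hval, hk]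
end

section
/- Let z_0 ≥ 1/4 with z_0 < 1/2 and z_{t+1} = sqrt(z_t(1 - z_t)). If t ≥ log₂(log₂(1/ε)) for 0 < ε < 1/2, then z_t ≥ 1/2 - ε. -/
lemma stmt_6_aux (z : ℕ → ℝ) (h0 : z 0 ≥ 1/4) (h0' : z 0 < 1/2)
    (hrec : ∀ t, z (t+1) = Real.sqrt (z t * (1 - z t))) :
    ∀ t, 0 ≤ 1 - 2 * z t ∧ 1 - 2 * z t ≤ (1/2 : ℝ)^(2^t) := by
  intro t
  induction t with
  | zero => constructor <;> simp <;> linarith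
  | succ n ih =>
    obtain ⟨hz0, hz1⟩ := ih
    have hhalf : (1/2 : ℝ)^(2^n) ≤ 1/2 := by
      apply pow_le_of_le_one (by norm_num) (by norm_num)
      positivity
    have hzn : z n * (1 - z n) ≥ 0 := by nlinarith
    have hs0 : 0 ≤ Real.sqrt (z n * (1 - z n)) := Real.sqrt_nonneg _
    have hs2 : Real.sqrt (z n * (1 - z n)) ^ 2 = z n * (1 - z n) := Real.sq_sqrt hzn
    set s := Real.sqrt (z n * (1 - z n)) with hsdef
    have hzr : z (n+1) = s := hrec n
    have hs_half : s ≤ 1/2 := by nlinarith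
    constructor
    · rw [hzr]; linarith
    · rw [hzr]
      have key : 1 - 2 * s ≤ (1 - 2 * z n)^2 := by nlinarith
      have : (1 - 2 * z n)^2 ≤ ((1/2 : ℝ)^(2^n))^2 := by
        apply pow_le_pow_left₀ hz0 hz1
      calc 1 - 2 * s ≤ ((1/2 : ℝ)^(2^n))^2 := by linarith
        _ = (1/2 : ℝ)^(2^(n+1)) := by rw [← pow_mul]; ring_nf

theorem stmt_6 (z : ℕ → ℝ) (h0 : z 0 ≥ 1/4) (h0' : z 0 < 1/2)
    (hrec : ∀ t, z (t+1) = Real.sqrt (z t * (1 - z t)))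
    (ε : ℝ) (hε0 : 0 < ε) (hε2 : ε < 1/2)
    (t : ℕ) (ht : (t : ℝ) ≥ Real.logb 2 (Real.logb 2 (1/ε))) :
    z t ≥ 1/2 - ε := by
  obtain ⟨hz0, hz1⟩ := stmt_6_aux z h0 h0' hrec t
  -- show (1/2)^(2^t) ≤ ε
  have hinv : (1:ℝ) < 1/ε := by
    rw [lt_div_iff₀ hε0]; linarith
  have hL : 0 < Real.logb 2 (1/ε) := Real.logb_pos (by norm_num) hinv
  set L := Real.logb 2 (1/ε) with hLdef
  have h1 : L ≤ (2:ℝ)^(t:ℝ) := by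
    calc L = (2:ℝ) ^ (Real.logb 2 L) := (Real.rpow_logb (by norm_num) (by norm_num) hL).symm
      _ ≤ (2:ℝ)^(t:ℝ) := by
        apply Real.rpow_le_rpow_of_exponent_le (by norm_num) ht
  have h2 : L ≤ ((2^t : ℕ) : ℝ) := by
    push_cast
    rwa [← Real.rpow_natCast 2 t]
  have h3 : (1:ℝ)/ε ≤ (2:ℝ)^(2^t : ℕ) := by
    calc (1:ℝ)/ε = (2:ℝ) ^ L := (Real.rpow_logb (by norm_num) (by norm_num) (by positivity)).symm
      _ ≤ (2:ℝ) ^ (((2^t : ℕ):ℝ)) := Real.rpow_le_rpow_of_exponent_le (by norm_num) h2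
      _ = (2:ℝ)^(2^t : ℕ) := Real.rpow_natCast 2 _
  have hpow : (1/2 : ℝ)^(2^t) ≤ ε := by
    rw [div_pow, one_pow, div_le_iff₀ (by positivity)]
    rw [div_le_iff₀ hε0] at h3
    nlinarith [pow_pos (by norm_num : (0:ℝ) < 2) (2^t)]
  linarith
end

section
/- In the two-agent lottery contest with unit costs, the maximum utility agent 1 can achieve given agent 2 plays x₂ ∈ (0,1) is (1 - sqrt(x₂))². Moreover, if x₂ ≥ 1/4 - ε̂ with 0 ≤ ε̂ ≤ 1/16, then max_s u₁(s, x₂) ≤ (1/4)(1 + 9ε̂). -/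
theorem stmt_9 (x₂ : ℝ) (hx0 : 0 < x₂) (hx1 : x₂ < 1) :
    (IsGreatest {u : ℝ | ∃ s : ℝ, 0 ≤ s ∧ u = s / (s + x₂) - s}
      ((1 - Real.sqrt x₂)^2)) ∧
    (∀ ε : ℝ, 0 ≤ ε → ε ≤ 1/16 → 1/4 - ε ≤ x₂ →
      ∀ s : ℝ, 0 ≤ s → s / (s + x₂) - s ≤ (1/4) * (1 + 9 * ε)) := by
  set r := Real.sqrt x₂ with hr
  have hr0 : 0 < r := Real.sqrt_pos.mpr hx0
  have hr2 : r ^ 2 = x₂ := Real.sq_sqrt hx0.le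
  have hr1 : r < 1 := by
    nlinarith [hr0]
  have hub : ∀ s : ℝ, 0 ≤ s → s / (s + x₂) - s ≤ (1 - r)^2 := by
    intro s hs
    have hsx : 0 < s + x₂ := by linarith
    rw [div_sub' hsx.ne', div_le_iff₀ hsx]
    nlinarith [sq_nonneg (s + x₂ - r), sq_nonneg r, mul_nonneg hs hx0.le]
  constructor
  · constructor
    · refine ⟨r - x₂, by nlinarith, ?_⟩
      have hsx : r - x₂ + x₂ = r := by ring
      rw [hsx]
      field_simp
      nlinarith
    · rintro u ⟨s, hs, rfl⟩
      exact hub s hs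
  · intro ε hε0 hε1 hεx s hs
    have h1 : s / (s + x₂) - s ≤ (1 - r)^2 := hub s hs
    have h2 : (1 - r)^2 ≤ (1/4) * (1 + 9 * ε) := by
      nlinarith [sq_nonneg (r - (1/2 - 13*ε/8)), sq_nonneg ε, hr0.le]
    linarith
end

section
/- In the two-agent lottery contest with unit costs, if x₁, x₂ ∈ [1/4 - ε/16, 1/4] for 0 ≤ ε ≤ 1, then (x₁, x₂) is an ε-approximate pure-strategy Nash equilibrium: u_i(x) ≥ (1-ε) · max_{s≥0} u_i(s, x_{-i}) for each i. -/
lemma aux_stmt_10 (ε : ℝ) (hε0 : 0 ≤ ε) (hε1 : ε ≤ 1)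
    (a b : ℝ)
    (hal : 1/4 - ε/16 ≤ a) (hau : a ≤ 1/4)
    (hbl : 1/4 - ε/16 ≤ b) (hbu : b ≤ 1/4)
    (s : ℝ) (hs : 0 ≤ s) :
    a / (a + b) - a ≥ (1 - ε) * (s / (s + b) - s) := by
  have ha : 3/16 ≤ a := by linarith
  have hb : 3/16 ≤ b := by linarith
  have hsum : 0 < a + b := by linarith
  have hsb : 0 < s + b := by linarith
  have key : 0 ≤ (1-ε)*s^2 + (a-(1-ε)*(1-b))*s + a*b := by
    nlinarith [sq_nonneg (2*(1-ε)*s - ((1-ε)*(1-b) - a)), sq_nonneg s,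
      mul_nonneg hs hs, sq_nonneg (s - 1/4), mul_nonneg (mul_nonneg hε0 hs) hs,
      sq_nonneg (ε*s), mul_nonneg hε0 hs, sq_nonneg (4*b-1), sq_nonneg (s-1/4+ε/8)]
  have step1 : (1-ε) * (s/(s+b) - s) ≤ a := by
    have h2 : (1-ε)*(s/(s+b)-s) = ((1-ε)*(s - s*(s+b)))/(s+b) := by
      field_simp
    rw [h2, div_le_iff₀ hsb]
    nlinarith [key]
  have step2 : 2*a ≤ a/(a+b) := by
    rw [le_div_iff₀ hsum]
    nlinarith
  linarith

theorem stmt_10 (ε : ℝ) (hε0 : 0 ≤ ε) (hε1 : ε ≤ 1)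
    (x₁ x₂ : ℝ)
    (h1l : 1/4 - ε/16 ≤ x₁) (h1u : x₁ ≤ 1/4)
    (h2l : 1/4 - ε/16 ≤ x₂) (h2u : x₂ ≤ 1/4) :
    (∀ s : ℝ, 0 ≤ s →
      x₁ / (x₁ + x₂) - x₁ ≥ (1 - ε) * (s / (s + x₂) - s)) ∧
    (∀ s : ℝ, 0 ≤ s →
      x₂ / (x₁ + x₂) - x₂ ≥ (1 - ε) * (s / (x₁ + s) - s)) := by
  constructor
  · intro s hs
    exact aux_stmt_10 ε hε0 hε1 x₁ x₂ h1l h1u h2l h2u s hs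
  · intro s hs
    have := aux_stmt_10 ε hε0 hε1 x₂ x₁ h2l h2u h1l h1u s hs
    rw [add_comm x₁ x₂, add_comm x₁ s]
    exact this
end

section
/- Let f(z) = (1/3)(Σᵢ zᵢ)³ - Σ_{i<j} zᵢzⱼ + (1/6)((n-1)/n)³ for z ∈ ℝ_{≥0}^n with Σᵢ zᵢ < 1. Then 0 ≤ f(z) ≤ 1/2. -/
noncomputable def potential (n : ℕ) (z : Fin n → ℝ) : ℝ :=
  (1/3) * (∑ i, z i)^3
    - ∑ i, ∑ j ∈ Finset.univ.filter (fun j => i < j), z i * z j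
    + (1/6) * (((n : ℝ) - 1)/n)^3

lemma pair_sum_id (n : ℕ) (z : Fin n → ℝ) :
    2 * (∑ i, ∑ j ∈ Finset.univ.filter (fun j => i < j), z i * z j)
      + ∑ i, (z i)^2 = (∑ i, z i)^2 := by
  classical
  have hswap : (∑ i, ∑ j ∈ Finset.univ.filter (fun j => j < i), z i * z j)
      = ∑ i, ∑ j ∈ Finset.univ.filter (fun j => i < j), z i * z j := by
    rw [Finset.sum_comm' (s' := fun j => Finset.univ.filter (fun i => j < i))
      (t' := Finset.univ)]
    · apply Finset.sum_congr rfl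
      intro j _
      apply Finset.sum_congr rfl
      intro i _
      ring
    · intro i j
      simp [and_comm]
  have hsplit : ∀ i : Fin n, ∑ j, z i * z j
      = (∑ j ∈ Finset.univ.filter (fun j => i < j), z i * z j)
        + (∑ j ∈ Finset.univ.filter (fun j => j < i), z i * z j) + z i * z i := by
    intro i
    rw [← Finset.sum_filter_add_sum_filter_not Finset.univ (fun j => i < j)]
    have : Finset.univ.filter (fun j => ¬ i < j)
        = insert i (Finset.univ.filter (fun j => j < i)) := by
      ext j
      simp only [Finset.mem_filter, Finset.mem_insert, Finset.mem_univ, true_and, not_lt]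
      constructor
      · intro h
        rcases lt_or_eq_of_le h with h' | h'
        · exact Or.inr h'
        · exact Or.inl h'
      · rintro (rfl | h)
        · exact le_refl _
        · exact le_of_lt h
    rw [this, Finset.sum_insert (by simp)]
    ring
  have := Finset.sum_mul_sum (Finset.univ : Finset (Fin n)) (Finset.univ : Finset (Fin n)) z z
  calc 2 * (∑ i, ∑ j ∈ Finset.univ.filter (fun j => i < j), z i * z j) + ∑ i, (z i)^2
      = (∑ i, ∑ j ∈ Finset.univ.filter (fun j => i < j), z i * z j)
        + (∑ i, ∑ j ∈ Finset.univ.filter (fun j => j < i), z i * z j)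
        + ∑ i, z i * z i := by rw [hswap]; simp [pow_two]; ring
    _ = ∑ i, ∑ j, z i * z j := by
        rw [← Finset.sum_add_distrib, ← Finset.sum_add_distrib]
        exact (Finset.sum_congr rfl fun i _ => (hsplit i).symm)
    _ = (∑ i, z i)^2 := by rw [pow_two, Finset.sum_mul_sum]

theorem stmt_12 (n : ℕ) (hn : 2 ≤ n) (z : Fin n → ℝ)
    (hz : ∀ i, 0 ≤ z i) (hs : ∑ i, z i < 1) :
    0 ≤ potential n z ∧ potential n z ≤ 1/2 := by
  set S := ∑ i, z i with hS
  set Q := ∑ i, (z i)^2 with hQ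
  set P := ∑ i, ∑ j ∈ Finset.univ.filter (fun j => i < j), z i * z j with hP
  have hid : 2 * P + Q = S^2 := pair_sum_id n z
  have hS0 : 0 ≤ S := Finset.sum_nonneg fun i _ => hz i
  have hn0 : (0:ℝ) < n := by positivity
  have hQn : S^2 ≤ n * Q := by
    have := sq_sum_le_card_mul_sum_sq (s := (Finset.univ : Finset (Fin n))) (f := z)
    simpa using this
  have hP0 : 0 ≤ P := by
    apply Finset.sum_nonneg; intro i _
    exact Finset.sum_nonneg fun j _ => mul_nonneg (hz i) (hz j)
  have hPle : P ≤ ((n:ℝ) - 1) / (2 * n) * S^2 := by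
    rw [div_mul_eq_mul_div, le_div_iff₀ (by positivity : (0:ℝ) < 2*n)]
    nlinarith [hQn, hid]
  have ha : (0:ℝ) ≤ ((n:ℝ)-1)/(2*n) := by
    apply div_nonneg
    · have : (2:ℝ) ≤ n := by exact_mod_cast hn
      linarith
    · positivity
  set a : ℝ := ((n:ℝ)-1)/(2*n) with hadef
  have hc : (1/6) * (((n:ℝ) - 1)/n)^3 = 4/3 * a^3 := by
    rw [hadef]; field_simp; ring
  have hcub : 0 ≤ S^3 - 3*a*S^2 + 4*a^3 := by
    have : S^3 - 3*a*S^2 + 4*a^3 = (S + a) * (S - 2*a)^2 := by ring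
    rw [this]
    exact mul_nonneg (by linarith) (sq_nonneg _)
  have hpot : potential n z = (1/3) * S^3 - P + (1/6) * (((n:ℝ) - 1)/n)^3 := rfl
  constructor
  · rw [hpot, hc]
    nlinarith [hPle, hcub]
  · rw [hpot, hc]
    have haS : a ≤ 1/2 := by
      rw [hadef, div_le_iff₀ (by positivity : (0:ℝ) < 2*n)]
      linarith
    have ha3 : a^3 ≤ (1/2)^3 := pow_le_pow_left₀ ha haS 3
    have hS3 : S^3 ≤ 1 := by nlinarith [hS0, hs]
    nlinarith [hP0, ha3, hS3]
end

section
/- Let f(z) = (1/3)(Σᵢ zᵢ)³ - Σ_{i<j} zᵢzⱼ + (1/6)((n-1)/n)³ for z ∈ ℝ_{≥0}^n with Σᵢ zᵢ < 1. If Σᵢ zᵢ ≤ 3(n-1)/(4n), then f(z) ≥ (1/40)((n-1)/n)³. -/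
theorem stmt_13 (n : ℕ) (hn : 2 ≤ n) (z : Fin n → ℝ)
    (hz : ∀ i, 0 ≤ z i) (hs : ∑ i, z i < 1)
    (hσ : ∑ i, z i ≤ 3 * ((n : ℝ) - 1) / (4 * n)) :
    potential n z ≥ (1/40) * (((n : ℝ) - 1)/n)^3 := by
  set σ := ∑ i, z i with hσdef
  set S2 := ∑ i, ∑ j ∈ Finset.univ.filter (fun j => i < j), z i * z j with hS2
  have hn1 : (1 : ℝ) ≤ (n : ℝ) := by exact_mod_cast Nat.one_le_of_lt hn
  have hnpos : (0 : ℝ) < (n : ℝ) := by linarith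
  set a : ℝ := ((n : ℝ) - 1)/n with ha
  have hapos : 0 ≤ a := div_nonneg (by linarith) hnpos.le
  have hσ0 : 0 ≤ σ := Finset.sum_nonneg fun i _ => hz i
  have hσa : σ ≤ 3/4 * a := by
    have he : 3 * ((n : ℝ) - 1) / (4 * n) = 3/4 * a := by
      rw [ha]; ring
    linarith [hσ, he.le]
  -- identity: σ^2 = ∑ z i ^2 + 2 * S2
  have hid : σ ^ 2 = (∑ i, z i ^ 2) + 2 * S2 := by
    have hswap : ∑ i, ∑ j ∈ Finset.univ.filter (fun j => j < i), z i * z j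
        = ∑ j, ∑ i ∈ Finset.univ.filter (fun i => j < i), z i * z j := by
      apply Finset.sum_comm'
      intro i j
      simp [and_comm]
    have hswap2 : ∑ j, ∑ i ∈ Finset.univ.filter (fun i => j < i), z i * z j = S2 := by
      rw [hS2]
      refine Finset.sum_congr rfl fun j _ => Finset.sum_congr rfl fun i _ => mul_comm _ _
    have step : ∀ i : Fin n, ∑ j, z i * z j
        = (∑ j ∈ Finset.univ.filter (fun j => i < j), z i * z j)
          + (∑ j ∈ Finset.univ.filter (fun j => j < i), z i * z j) + z i ^ 2 := by
      intro i
      rw [← Finset.sum_filter_add_sum_filter_not Finset.univ (fun j => i < j)]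
      have : Finset.univ.filter (fun j => ¬ i < j)
          = insert i (Finset.univ.filter (fun j => j < i)) := by
        ext j
        simp only [Finset.mem_filter, Finset.mem_insert, Finset.mem_univ, true_and]
        constructor
        · intro h
          rcases lt_trichotomy i j with h1 | h1 | h1
          · exact absurd h1 h
          · exact Or.inl h1.symm
          · exact Or.inr h1
        · rintro (rfl | h)
          · exact lt_irrefl _
          · exact asymm h
      rw [this, Finset.sum_insert (by simp)]
      ring
    have : σ * σ = ∑ i, ∑ j, z i * z j := by
      rw [hσdef, Finset.sum_mul_sum]
    rw [sq, this]
    rw [Finset.sum_congr rfl fun i _ => step i]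
    simp only [Finset.sum_add_distrib, hswap, hswap2]
    ring
  -- Cauchy-Schwarz: σ^2 ≤ n * ∑ z i ^2
  have hcs : σ ^ 2 ≤ (n : ℝ) * ∑ i, z i ^ 2 := by
    have := sq_sum_le_card_mul_sum_sq (s := (Finset.univ : Finset (Fin n))) (f := z)
    simpa using this
  -- hence 2 * S2 ≤ (1 - 1/n) σ^2 = a σ^2
  have hS2le : S2 ≤ a / 2 * σ ^ 2 := by
    have h1 : (∑ i, z i ^ 2) ≥ σ ^ 2 / n := by
      rw [ge_iff_le, div_le_iff₀ hnpos]
      linarith [hcs]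
    have : 2 * S2 = σ ^ 2 - ∑ i, z i ^ 2 := by linarith [hid]
    have h2 : 2 * S2 ≤ σ ^ 2 - σ ^ 2 / n := by linarith
    have h3 : σ ^ 2 - σ ^ 2 / n = a * σ ^ 2 := by
      rw [ha]; field_simp
    nlinarith
  -- conclude
  have key : (1/3) * σ ^ 3 - a / 2 * σ ^ 2 + (1/6) * a ^ 3 ≥ (1/40) * a ^ 3 := by
    nlinarith [sq_nonneg σ, sq_nonneg (a - σ), sq_nonneg (3/4 * a - σ), mul_nonneg hapos hσ0,
      mul_nonneg (mul_nonneg hapos hapos) hapos, mul_nonneg hσ0 (sub_nonneg.2 hσa),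
      mul_nonneg hapos (mul_nonneg hσ0 (sub_nonneg.2 hσa)),
      mul_nonneg hσ0 (mul_nonneg hσ0 (sub_nonneg.2 hσa))]
  have hσ3 : σ ^ 3 ≥ 0 := by positivity
  unfold potential
  rw [← hσdef, ← hS2, ← ha]
  linarith [hS2le, key]
end
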